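/- For k ∈ ℕ₀ and l ∈ ℕ with l ≥ 1, there exists a polynomial p such that for all t ∈ [−1,1]: f_{k, k+2l}(t) = (k+2)·f_{k+2, k+2l}(t) − t·f_{k+1, k+2l−1}(t) + p(t). Moreover, f_{k, k+2l+1} is identically zero for all k, l ∈ ℕ₀. -/

import Mathlib

open MeasureTheory ProbabilityTheory Filter Set

noncomputable section

/-- The standard Gaussian measure `N(0,1)` on `ℝ`. -/
def stdGaussian : Measure ℝ := gaussianReal 0 1

/-- The `n`-th normalized probabilists' Hermite polynomial as a function `ℝ → ℝ`. -/
def hermiteFun (n : ℕ) (x : ℝ) : ℝ :=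
  (Polynomial.aeval x (Polynomial.hermite n)) / Real.sqrt (n.factorial)

/-- The `n`-th Hermite coefficient `a_n(f) = ∫ f · h_n dγ`. -/
def hermiteCoeff (f : ℝ → ℝ) (n : ℕ) : ℝ :=
  ∫ x, f x * hermiteFun n x ∂stdGaussian

/-- The reference activation `s_k(x) = sgn(x) x^k / (2 k!)`. -/
def refAct (k : ℕ) (x : ℝ) : ℝ := Real.sign x * x ^ k / (2 * k.factorial)

/-- The mix term `f_{i,j}(t) = Σ_n a_n(s_i) a_n(s_j) t^n`. -/
def mixTerm (i j : ℕ) (t : ℝ) : ℝ :=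
  ∑' n : ℕ, hermiteCoeff (refAct i) n * hermiteCoeff (refAct j) n * t ^ n

open Polynomial
open scoped ENNReal NNReal Nat

def g (x : ℝ) : ℝ := Real.exp (-(x^2)/2)

def P (n : ℕ) (x : ℝ) : ℝ := Polynomial.aeval x (Polynomial.hermite n)

lemma g_pos (x : ℝ) : 0 < g x := Real.exp_pos _

lemma P_eq (n : ℕ) (x : ℝ) : P n x = ((hermite n).map (Int.castRingHom ℝ)).eval x := by
  simp [P, aeval_def, eval_map]

lemma hasDerivAt_P (n : ℕ) (x : ℝ) :
    HasDerivAt (P n) (((hermite n).derivative.map (Int.castRingHom ℝ)).eval x) x := by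
  have := ((hermite n).map (Int.castRingHom ℝ)).hasDerivAt x
  rw [derivative_map] at this
  simp only [← P_eq] at this
  exact this

lemma hasDerivAt_g (x : ℝ) : HasDerivAt g (-x * g x) x := by
  have h1 : HasDerivAt (fun x : ℝ => -(x^2)/2) (-x) x := by
    have := (hasDerivAt_pow 2 x).neg.div_const 2
    exact this.congr_deriv (by norm_num; ring)
  have := h1.exp
  exact this.congr_deriv (by unfold g; ring)

lemma hasDerivAt_Pg (n : ℕ) (x : ℝ) :
    HasDerivAt (fun y => -(P n y * g y)) (P (n+1) x * g x) x := by
  have h := ((hasDerivAt_P n x).mul (hasDerivAt_g x)).neg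
  refine h.congr_deriv ?_
  have : P (n+1) x = x * P n x - ((hermite n).derivative.map (Int.castRingHom ℝ)).eval x := by
    rw [P_eq, hermite_succ]
    simp [P_eq]
  rw [this]; ring

lemma tendsto_poly_g (Q : Polynomial ℝ) :
    Tendsto (fun x => Q.eval x * g x) atTop (nhds 0) := by
  have h1 : Tendsto (fun x => Q.eval x / Real.exp x) atTop (nhds 0) :=
    Polynomial.tendsto_div_exp_atTop _
  have h2 : Tendsto (fun x => |Q.eval x / Real.exp x|) atTop (nhds 0) := by
    simpa [abs_zero] using h1.abs
  refine squeeze_zero_norm' ?_ h2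
  filter_upwards [eventually_ge_atTop (2:ℝ)] with x hx
  have hg : g x ≤ Real.exp (-x) := by
    apply Real.exp_le_exp.mpr
    nlinarith
  have hn : ‖Q.eval x * g x‖ = |Q.eval x| * g x := by
    rw [norm_mul, Real.norm_eq_abs, Real.norm_eq_abs, abs_of_pos (g_pos x)]
  rw [hn, abs_div, Real.abs_exp, div_eq_mul_inv, ← Real.exp_neg]
  exact mul_le_mul_of_nonneg_left hg (abs_nonneg _)

lemma integrable_pow_g (n : ℕ) : Integrable (fun x : ℝ => x ^ n * g x) := by
  have h := integrable_rpow_mul_exp_neg_mul_sq (b := (1/2:ℝ)) (by norm_num) (s := (n:ℝ))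
    (by exact_mod_cast neg_one_lt_zero.trans_le n.cast_nonneg)
  apply h.congr
  filter_upwards with x
  rw [Real.rpow_natCast]
  congr 1
  unfold g
  congr 1
  ring

lemma integrable_poly_g (Q : Polynomial ℝ) : Integrable (fun x => Q.eval x * g x) := by
  have : (fun x => Q.eval x * g x)
      = fun x => ∑ i ∈ Finset.range (Q.natDegree + 1), Q.coeff i * (x ^ i * g x) := by
    funext x
    rw [eval_eq_sum_range, Finset.sum_mul]
    congr 1; funext i; ring
  rw [this]
  exact integrable_finset_sum _ fun i _ => (integrable_pow_g i).const_mul _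
def c : ℝ := (Real.sqrt (2*Real.pi))⁻¹

lemma pdf_eq (x : ℝ) : gaussianPDFReal 0 1 x = c * g x := by
  simp [gaussianPDFReal, c, g]

lemma integral_stdGaussian (f : ℝ → ℝ) :
    ∫ x, f x ∂stdGaussian = ∫ x, f x * (c * g x) := by
  rw [_root_.stdGaussian, gaussianReal_of_var_ne_zero _ one_ne_zero]
  have hmeas : Measurable fun x => (gaussianPDFReal 0 1 x).toNNReal :=
    (measurable_gaussianPDFReal 0 1).real_toNNReal
  have hfun : gaussianPDF 0 1 = (fun x => ((gaussianPDFReal 0 1 x).toNNReal : ℝ≥0∞)) := by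
    funext x
    rw [gaussianPDF, ENNReal.ofReal]
  rw [hfun, integral_withDensity_eq_integral_smul hmeas]
  congr 1
  funext x
  rw [NNReal.smul_def, Real.coe_toNNReal _ (gaussianPDFReal_nonneg 0 1 x), smul_eq_mul, pdf_eq]
  ring

def J (k n : ℕ) : ℝ := ∫ x in Ioi (0:ℝ), x^k * (P n x * g x)

lemma pow_P_g_eq (k n : ℕ) (x : ℝ) :
    x^k * (P n x * g x) = ((X:ℝ[X])^k * (hermite n).map (Int.castRingHom ℝ)).eval x * g x := by
  rw [eval_mul, eval_pow, eval_X, P_eq]; ring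

lemma integrable_pow_P_g (k n : ℕ) : Integrable (fun x => x^k * (P n x * g x)) := by
  have := integrable_poly_g ((X:ℝ[X])^k * (hermite n).map (Int.castRingHom ℝ))
  apply this.congr
  filter_upwards with x
  rw [pow_P_g_eq]

lemma tendsto_pow_P_g (k n : ℕ) :
    Tendsto (fun x => x^k * (P n x * g x)) atTop (nhds 0) := by
  have := tendsto_poly_g ((X:ℝ[X])^k * (hermite n).map (Int.castRingHom ℝ))
  apply this.congr
  intro x
  rw [pow_P_g_eq]

lemma hasDerivAt_Pg' (n : ℕ) (x : ℝ) :
    HasDerivAt (fun y => P n y * g y) (-(P (n+1) x * g x)) x := by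
  have := (hasDerivAt_Pg n x).neg
  simpa [Pi.neg_def] using this

lemma g_zero : g 0 = 1 := by simp [g]

lemma J_zero (n : ℕ) : J 0 (n+1) = P n 0 := by
  have key := integral_Ioi_of_hasDerivAt_of_tendsto' (a := (0:ℝ))
    (f := fun y => -(P n y * g y)) (f' := fun x => P (n+1) x * g x)
    (fun x _ => hasDerivAt_Pg n x)
    (by
      have := integrable_pow_P_g 0 (n+1)
      simpa using this.integrableOn)
    (by simpa using (tendsto_pow_P_g 0 n).neg)
  rw [J]
  simp only [pow_zero, one_mul]
  rw [key]
  simp [g_zero]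

lemma J_succ (k n : ℕ) : J (k+1) (n+1) = ((k:ℝ)+1) * J k n := by
  have hd : ∀ x : ℝ, HasDerivAt (fun y => -(y^(k+1) * (P n y * g y)))
      (x^(k+1) * (P (n+1) x * g x) - ((k:ℝ)+1) * (x^k * (P n x * g x))) x := by
    intro x
    have h := ((hasDerivAt_pow (k+1) x).mul (hasDerivAt_Pg' n x)).neg
    refine h.congr_deriv ?_
    push_cast
    ring
  have hint : Integrable (fun x : ℝ =>
      x^(k+1) * (P (n+1) x * g x) - ((k:ℝ)+1) * (x^k * (P n x * g x))) :=
    (integrable_pow_P_g (k+1) (n+1)).sub ((integrable_pow_P_g k n).const_mul _)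
  have key := integral_Ioi_of_hasDerivAt_of_tendsto' (a := (0:ℝ))
    (fun x _ => hd x) hint.integrableOn
    (by simpa using (tendsto_pow_P_g (k+1) n).neg)
  rw [integral_sub ((integrable_pow_P_g (k+1) (n+1)).integrableOn)
    (((integrable_pow_P_g k n).const_mul _).integrableOn), integral_const_mul] at key
  simp only [ne_eq, zero_pow, Nat.succ_ne_zero, not_false_eq_true, zero_mul, mul_zero, neg_zero,
    sub_zero] at key
  rw [J, J]
  linarith [key]

lemma J_closed (k : ℕ) : ∀ n : ℕ, J k (k + n + 1) = (k)! * P n 0 := by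
  induction k with
  | zero => intro n; simpa using J_zero n
  | succ k ih =>
    intro n
    have h1 : k + 1 + n + 1 = (k + (n+1)) + 1 := by ring
    rw [h1, J_succ k (k + (n+1))]
    have h2 : k + (n+1) = k + n + 1 := by ring
    rw [h2, ih n]
    push_cast [Nat.factorial_succ]
    ring

lemma P_odd_zero {m : ℕ} (hm : Odd m) : P m 0 = 0 := by
  rw [P_eq, ← coeff_zero_eq_eval_zero, coeff_map]
  rw [coeff_hermite_of_odd_add (by simpa using hm)]
  simp

lemma P_neg (n : ℕ) (x : ℝ) : P n (-x) = (-1)^n * P n x := by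
  rw [P_eq, P_eq]
  have hdeg : ((hermite n).map (Int.castRingHom ℝ)).natDegree < n + 1 :=
    lt_of_le_of_lt natDegree_map_le (by rw [natDegree_hermite]; exact Nat.lt_succ_self n)
  rw [eval_eq_sum_range' hdeg, eval_eq_sum_range' hdeg, Finset.mul_sum]
  apply Finset.sum_congr rfl
  intro i _
  rcases Nat.even_or_odd (n + i) with h | h
  · have hpow : ((-1:ℝ))^i = (-1)^n := by
      rcases Nat.even_or_odd n with hn | hn
      · have hi : Even i := (Nat.even_add.mp h).mp hn
        rw [hi.neg_one_pow, hn.neg_one_pow]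
      · have hi : Odd i := by
          rcases Nat.even_or_odd i with hi | hi
          · exact absurd ((Nat.even_add.mp h).mpr hi) (Nat.not_even_iff_odd.mpr hn)
          · exact hi
        rw [hi.neg_one_pow, hn.neg_one_pow]
    rw [neg_pow, hpow]
    ring
  · rw [coeff_map, coeff_hermite_of_odd_add h]
    simp

lemma measurable_sign : Measurable Real.sign := by
  have : Real.sign = fun r : ℝ => if r < 0 then (-1:ℝ) else if 0 < r then 1 else 0 := by
    funext r; rfl
  rw [this]
  exact Measurable.ite (measurableSet_lt measurable_id measurable_const) measurable_const
    (Measurable.ite (measurableSet_lt measurable_const measurable_id) measurable_const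
      measurable_const)

def SI (k n : ℕ) : ℝ := ∫ x, Real.sign x * (x^k * (P n x * g x))

lemma integrable_sign_pow_P_g (k n : ℕ) :
    Integrable (fun x => Real.sign x * (x^k * (P n x * g x))) := by
  apply Integrable.mono' (integrable_pow_P_g k n).abs
  · have hc : Continuous fun x : ℝ => x^k * (P n x * g x) := by
      apply Continuous.mul (continuous_pow k)
      apply Continuous.mul
      · exact Polynomial.continuous_aeval _
      · exact Real.continuous_exp.comp (by continuity)
    exact (measurable_sign.mul hc.measurable).aestronglyMeasurable
  · filter_upwards with x
    rw [Real.norm_eq_abs, abs_mul]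
    have : |Real.sign x| ≤ 1 := by
      rcases Real.sign_apply_eq x with h | h | h <;> rw [h] <;> norm_num
    calc |Real.sign x| * |x^k * (P n x * g x)| ≤ 1 * |x^k * (P n x * g x)| :=
          mul_le_mul_of_nonneg_right this (abs_nonneg _)
      _ = |x^k * (P n x * g x)| := one_mul _


lemma g_neg (x : ℝ) : g (-x) = g x := by simp [g]

lemma SI_eq (k n : ℕ) : SI k n = (1 - (-1:ℝ)^(k+n)) * J k n := by
  rw [SI]
  set f : ℝ → ℝ := fun x => Real.sign x * (x^k * (P n x * g x)) with hf
  rw [← intervalIntegral.integral_Iic_add_Ioi ((integrable_sign_pow_P_g k n).integrableOn)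
    ((integrable_sign_pow_P_g k n).integrableOn)]
  have hIoi : ∫ x in Ioi (0:ℝ), f x = J k n := by
    rw [J]
    apply setIntegral_congr_fun measurableSet_Ioi
    intro x hx
    simp only [hf]
    rw [Real.sign_of_pos hx, one_mul]
  have hIic : ∫ x in Iic (0:ℝ), f x = -((-1:ℝ)^(k+n)) * J k n := by
    have h0 := integral_comp_neg_Iic (0:ℝ) (fun x => f (-x))
    rw [neg_zero] at h0
    simp only [neg_neg] at h0
    rw [h0]
    have : ∀ x ∈ Ioi (0:ℝ), f (-x) = (-((-1:ℝ)^(k+n))) * (x^k * (P n x * g x)) := by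
      intro x hx
      simp only [hf]
      rw [Real.sign_neg, Real.sign_of_pos hx, P_neg, g_neg, neg_pow x k]
      rw [pow_add]
      ring
    rw [setIntegral_congr_fun measurableSet_Ioi this, integral_const_mul, J]
  rw [hIic, hIoi]
  ring

lemma hermiteCoeff_eq (k n : ℕ) :
    hermiteCoeff (refAct k) n = c/(2*(k)! * Real.sqrt (n)!) * SI k n := by
  rw [hermiteCoeff, integral_stdGaussian, SI, ← integral_const_mul]
  congr 1
  funext x
  rw [refAct, hermiteFun]
  have h1 : ((k)! : ℝ) ≠ 0 := by positivity
  have h2 : Real.sqrt ((n)! : ℝ) ≠ 0 := by positivity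
  show Real.sign x * x ^ k / (2 * (k)!) * (Polynomial.aeval x (Polynomial.hermite n)
    / Real.sqrt ((n)! : ℝ)) * (c * g x) = _
  rw [show (Polynomial.aeval x (Polynomial.hermite n) : ℝ) = P n x from rfl]
  field_simp

lemma coeff_vanish {k n : ℕ} (h : Even (k+n)) : hermiteCoeff (refAct k) n = 0 := by
  rw [hermiteCoeff_eq, SI_eq, h.neg_one_pow]
  simp

lemma coeff_closed (k m : ℕ) :
    hermiteCoeff (refAct k) (k+m+1) = c * P m 0 / Real.sqrt ((k+m+1)!) := by
  rw [hermiteCoeff_eq, SI_eq, J_closed]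
  rcases Nat.even_or_odd m with hm | hm
  · have hodd : Odd (k + (k+m+1)) := by
      rcases hm with ⟨j, rfl⟩
      exact ⟨k + j, by ring⟩
    rw [hodd.neg_one_pow]
    have h1 : ((k)! : ℝ) ≠ 0 := by positivity
    have h2 : Real.sqrt (((k+m+1))! : ℝ) ≠ 0 := by positivity
    field_simp
    ring
  · rw [P_odd_zero hm]
    simp

lemma c_pos : 0 < c := by
  rw [c]
  positivity

lemma P_coeff (r : ℕ) : P r 0 = ((hermite r).coeff 0 : ℝ) := by
  rw [P_eq, ← coeff_zero_eq_eval_zero, coeff_map]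
  rfl

lemma P0_even (j : ℕ) : P (2*j) 0 = (-1:ℝ)^j * ((2*j-1)‼ : ℝ) := by
  rw [P_coeff, show 2*j = 2*j+0 from rfl, coeff_hermite_explicit]
  push_cast
  simp

lemma df_odd (j : ℕ) : (2*j+1)‼ = (2*j+1) * (2*j-1)‼ := by
  cases j with
  | zero => decide
  | succ j =>
    have h : 2*(j+1)+1 = (2*j+1)+2 := by ring
    rw [h, Nat.doubleFactorial_add_two]
    congr 1 <;> omega

lemma hermite0_rec (m : ℕ) : P (m+2) 0 = -((m:ℝ)+1) * P m 0 := by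
  rcases Nat.even_or_odd m with hm | hm
  · obtain ⟨j, rfl⟩ := hm
    have h2 : j + j = 2 * j := by ring
    rw [h2, show 2*j+2 = 2*(j+1) from by ring, P0_even, P0_even,
      show 2*(j+1)-1 = 2*j+1 from by omega, df_odd]
    push_cast
    ring
  · have h2 : Odd (m+2) := by
      rcases hm with ⟨j, rfl⟩
      exact ⟨j+1, by ring⟩
    rw [P_odd_zero h2, P_odd_zero hm]
    ring

lemma df_le_succ (n : ℕ) : n‼ ≤ (n+1)‼ := by
  induction n using Nat.twoStepInduction with
  | zero => decide
  | one => decide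
  | more n ih _ =>
    rw [Nat.doubleFactorial_add_two, show n+2+1 = (n+1)+2 from rfl, Nat.doubleFactorial_add_two]
    exact Nat.mul_le_mul (by omega) ih

lemma P_sq_le (m : ℕ) : (P m 0)^2 ≤ ((m)! : ℝ) := by
  rcases Nat.even_or_odd m with hm | hm
  · obtain ⟨j, rfl⟩ := hm
    have h2 : j + j = 2 * j := by ring
    rw [h2, P0_even, mul_pow, ← pow_mul, mul_comm j 2, pow_mul]
    norm_num
    have key : (2*j - 1)‼ * (2*j-1)‼ ≤ (2*j)! := by
      rcases Nat.eq_zero_or_pos j with hj | hj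
      · subst hj; decide
      · have h3 : 2*j = (2*j-1) + 1 := by omega
        rw [h3, Nat.factorial_eq_mul_doubleFactorial]
        exact Nat.mul_le_mul (df_le_succ (2*j-1)) le_rfl
    rw [sq]
    exact_mod_cast key
  · rw [P_odd_zero hm]
    have : (0:ℝ) ≤ ((m)! : ℝ) := by positivity
    simpa using this

lemma coeff_sq_le (i m : ℕ) :
    (hermiteCoeff (refAct i) (i+m+1))^2 ≤ c^2 * ((m)! : ℝ) / (((i+m+1))! : ℝ) := by
  rw [coeff_closed, div_pow, mul_pow]
  have hF : (0:ℝ) ≤ (((i+m+1))! : ℝ) := by positivity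
  rw [Real.sq_sqrt hF]
  gcongr
  exact P_sq_le m

lemma nat_key {i j n : ℕ} (hi : i ≤ j) (hij : 2 ≤ i + j) (hn : j + 1 ≤ n) (hn4 : 4 ≤ n) :
    n^4 * ((n-i-1)! * (n-j-1)!) ≤ 4 * ((n)! * (n)!) := by
  obtain ⟨m, rfl⟩ : ∃ m, n = m + 4 := ⟨n - 4, by omega⟩
  have fact2 : (m+4)! = (m+4)*(m+3)*(m+2)! := by
    rw [show m+4 = (m+2)+1+1 from rfl, Nat.factorial_succ, Nat.factorial_succ]
    ring
  have fact4 : (m+4)! = (m+4)*(m+3)*(m+2)*(m+1)! := by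
    rw [fact2, show m+2 = (m+1)+1 from rfl, Nat.factorial_succ]
    ring
  rcases Nat.eq_zero_or_pos i with hi0 | hi0
  · subst hi0
    have hj2 : 2 ≤ j := by omega
    have f1 : (m+4-0-1)! = (m+3)! := by norm_num
    have f2 : (m+4-j-1)! ≤ (m+1)! := Nat.factorial_le (by omega)
    have fact3 : (m+4)! = (m+4)*(m+3)! := Nat.factorial_succ _
    calc (m+4)^4 * ((m+4-0-1)! * (m+4-j-1)!)
        ≤ (m+4)^4 * ((m+3)! * (m+1)!) := by
          rw [f1]; exact Nat.mul_le_mul_left _ (Nat.mul_le_mul_left _ f2)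
      _ ≤ (4*((m+4)*((m+4)*(m+3)*(m+2)))) * ((m+3)! * (m+1)!) := by
          apply Nat.mul_le_mul_right
          have base : (m+4)^2 ≤ 4*((m+3)*(m+2)) := by nlinarith
          calc (m+4)^4 = (m+4)^2 * (m+4)^2 := by ring
            _ ≤ (m+4)^2 * (4*((m+3)*(m+2))) := Nat.mul_le_mul_left _ base
            _ = 4*((m+4)*((m+4)*(m+3)*(m+2))) := by ring
      _ = 4 * (((m+4)*(m+3)!) * ((m+4)*(m+3)*(m+2)*(m+1)!)) := by ring
      _ = 4 * ((m+4)! * (m+4)!) := by rw [← fact3, ← fact4]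
  · have f1 : (m+4-i-1)! ≤ (m+2)! := Nat.factorial_le (by omega)
    have f2 : (m+4-j-1)! ≤ (m+2)! := Nat.factorial_le (by omega)
    calc (m+4)^4 * ((m+4-i-1)! * (m+4-j-1)!)
        ≤ (m+4)^4 * ((m+2)! * (m+2)!) := by
          exact Nat.mul_le_mul_left _ (Nat.mul_le_mul f1 f2)
      _ ≤ (4*(((m+4)*(m+3))*((m+4)*(m+3)))) * ((m+2)! * (m+2)!) := by
          apply Nat.mul_le_mul_right
          have base : (m+4)^2 ≤ 4*((m+3)*(m+3)) := by nlinarith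
          calc (m+4)^4 = (m+4)^2 * (m+4)^2 := by ring
            _ ≤ (m+4)^2 * (4*((m+3)*(m+3))) := Nat.mul_le_mul_left _ base
            _ = 4*(((m+4)*(m+3))*((m+4)*(m+3))) := by ring
      _ = 4 * (((m+4)*(m+3)*(m+2)!) * ((m+4)*(m+3)*(m+2)!)) := by ring
      _ = 4 * ((m+4)! * (m+4)!) := by rw [← fact2]

lemma mul_bound {i j : ℕ} (hi : i ≤ j) (hij : 2 ≤ i + j) {n : ℕ}
    (hn : j + 1 ≤ n) (hn4 : 4 ≤ n) :
    |hermiteCoeff (refAct i) n * hermiteCoeff (refAct j) n| ≤ 2*c^2/(n:ℝ)^2 := by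
  have hin : i + 1 ≤ n := by omega
  have e1 : n = i + (n - i - 1) + 1 := by omega
  have e2 : n = j + (n - j - 1) + 1 := by omega
  have b1 : (hermiteCoeff (refAct i) n)^2 ≤ c^2 * (((n-i-1))! : ℝ) / (((n))! : ℝ) := by
    have h := coeff_sq_le i (n - i - 1)
    rwa [← e1] at h
  have b2 : (hermiteCoeff (refAct j) n)^2 ≤ c^2 * (((n-j-1))! : ℝ) / (((n))! : ℝ) := by
    have h := coeff_sq_le j (n - j - 1)
    rwa [← e2] at h
  have hnpos : (0:ℝ) < (n:ℝ) := by
    have : 0 < n := by omega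
    exact_mod_cast this
  set a := hermiteCoeff (refAct i) n
  set b := hermiteCoeff (refAct j) n
  have hsq : (a*b)^2 ≤ (2*c^2/(n:ℝ)^2)^2 := by
    have h2 : a^2*b^2 ≤ (c^2 * (((n-i-1))! : ℝ) / (((n))! : ℝ))*(c^2 * (((n-j-1))! : ℝ) / (((n))! : ℝ)) :=
      mul_le_mul b1 b2 (sq_nonneg b) (le_trans (sq_nonneg a) b1)
    have hkey : ((n:ℝ))^4 * ((((n-i-1))! : ℝ) * (((n-j-1))! : ℝ)) ≤ 4*((((n))! : ℝ)*(((n))! : ℝ)) := by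
      exact_mod_cast nat_key hi hij hn hn4
    have h4 : (c^2 * (((n-i-1))! : ℝ) / (((n))! : ℝ))*(c^2 * (((n-j-1))! : ℝ) / (((n))! : ℝ))
        ≤ (2*c^2/(n:ℝ)^2)^2 := by
      have hfpos : (0:ℝ) < (((n))! : ℝ) := by positivity
      rw [div_mul_div_comm, show (2*c^2/(n:ℝ)^2)^2 = 4*c^4/((n:ℝ)^4) from by ring,
        div_le_div_iff₀ (by positivity) (by positivity)]
      calc c ^ 2 * (((n-i-1))! : ℝ) * (c ^ 2 * (((n-j-1))! : ℝ)) * (n:ℝ)^4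
          = c^4 * ((n:ℝ)^4 * ((((n-i-1))! : ℝ) * (((n-j-1))! : ℝ))) := by ring
        _ ≤ c^4 * (4*((((n))! : ℝ)*(((n))! : ℝ))) := by
            apply mul_le_mul_of_nonneg_left hkey (by positivity)
        _ = 4*c^4*((((n))! : ℝ)*(((n))! : ℝ)) := by ring
    calc (a*b)^2 = a^2*b^2 := by ring
      _ ≤ _ := le_trans h2 h4
  calc |a*b| = Real.sqrt ((a*b)^2) := (Real.sqrt_sq_eq_abs _).symm
    _ ≤ Real.sqrt ((2*c^2/(n:ℝ)^2)^2) := Real.sqrt_le_sqrt hsq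
    _ = 2*c^2/(n:ℝ)^2 := Real.sqrt_sq (by positivity)

lemma summable_mix {i j : ℕ} (hi : i ≤ j) (hij : 2 ≤ i + j) {t : ℝ} (ht : |t| ≤ 1) :
    Summable (fun n => hermiteCoeff (refAct i) n * hermiteCoeff (refAct j) n * t^n) := by
  apply Summable.of_norm_bounded_eventually_nat (g := fun n => 2*c^2/(n:ℝ)^2)
  · have hs : Summable (fun n : ℕ => 1/(n:ℝ)^2) := Real.summable_one_div_nat_pow.mpr one_lt_two
    have := hs.mul_left (2*c^2)
    apply this.congr
    intro n
    rw [mul_one_div]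
  · filter_upwards [eventually_ge_atTop (max (j+1) 4)] with n hn
    have h1 : j + 1 ≤ n := le_trans (le_max_left _ _) hn
    have h2 : 4 ≤ n := le_trans (le_max_right _ _) hn
    rw [Real.norm_eq_abs, abs_mul]
    have htn : |t^n| ≤ 1 := by
      rw [abs_pow]
      exact pow_le_one₀ (abs_nonneg t) ht
    calc |hermiteCoeff (refAct i) n * hermiteCoeff (refAct j) n| * |t^n|
        ≤ |hermiteCoeff (refAct i) n * hermiteCoeff (refAct j) n| * 1 :=
          mul_le_mul_of_nonneg_left htn (abs_nonneg _)
      _ = |hermiteCoeff (refAct i) n * hermiteCoeff (refAct j) n| := mul_one _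
      _ ≤ 2*c^2/(n:ℝ)^2 := mul_bound hi hij h1 h2

lemma mix_odd (k l n : ℕ) :
    hermiteCoeff (refAct k) n * hermiteCoeff (refAct (k+2*l+1)) n = 0 := by
  rcases Nat.even_or_odd (k+n) with h | h
  · rw [coeff_vanish h, zero_mul]
  · have h2 : Even ((k+2*l+1)+n) := by
      rcases h with ⟨u, hu⟩
      exact ⟨u+l+1, by omega⟩
    rw [coeff_vanish h2, mul_zero]

lemma termwise (k l : ℕ) (hl : 1 ≤ l) {n : ℕ} (hn : k + 2*l + 3 ≤ n) :
    hermiteCoeff (refAct k) n * hermiteCoeff (refAct (k+2*l)) n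
      - ((k:ℝ)+2) * (hermiteCoeff (refAct (k+2)) n * hermiteCoeff (refAct (k+2*l)) n)
      + hermiteCoeff (refAct (k+1)) (n-1) * hermiteCoeff (refAct (k+2*l-1)) (n-1) = 0 := by
  obtain ⟨m, rfl⟩ : ∃ m, n = k + m + 1 := ⟨n - k - 1, by omega⟩
  have hm : 2*l + 2 ≤ m := by omega
  have c1 : hermiteCoeff (refAct k) (k+m+1) = c * P m 0 / Real.sqrt ((k+m+1)!) :=
    coeff_closed k m
  have c2 : hermiteCoeff (refAct (k+2*l)) (k+m+1)
      = c * P (m-2*l) 0 / Real.sqrt ((k+m+1)!) := by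
    have h := coeff_closed (k+2*l) (m-2*l)
    rwa [show (k+2*l)+(m-2*l)+1 = k+m+1 from by omega] at h
  have c3 : hermiteCoeff (refAct (k+2)) (k+m+1)
      = c * P (m-2) 0 / Real.sqrt ((k+m+1)!) := by
    have h := coeff_closed (k+2) (m-2)
    rwa [show (k+2)+(m-2)+1 = k+m+1 from by omega] at h
  have c4 : hermiteCoeff (refAct (k+1)) (k+m)
      = c * P (m-2) 0 / Real.sqrt ((k+m)!) := by
    have h := coeff_closed (k+1) (m-2)
    rwa [show (k+1)+(m-2)+1 = k+m from by omega] at h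
  have c5 : hermiteCoeff (refAct (k+2*l-1)) (k+m)
      = c * P (m-2*l) 0 / Real.sqrt ((k+m)!) := by
    have h := coeff_closed (k+2*l-1) (m-2*l)
    rwa [show (k+2*l-1)+(m-2*l)+1 = k+m from by omega] at h
  have hrec : P m 0 = -(((m:ℝ))-1) * P (m-2) 0 := by
    have h := hermite0_rec (m-2)
    rw [show (m-2)+2 = m from by omega] at h
    rw [h, Nat.cast_sub (by omega : 2 ≤ m)]
    push_cast
    ring
  have hS : Real.sqrt (((k+m+1))! : ℝ) * Real.sqrt (((k+m+1))! : ℝ) = (((k+m+1))! : ℝ) :=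
    Real.mul_self_sqrt (by positivity)
  have hT : Real.sqrt (((k+m))! : ℝ) * Real.sqrt (((k+m))! : ℝ) = (((k+m))! : ℝ) :=
    Real.mul_self_sqrt (by positivity)
  have hS0 : Real.sqrt (((k+m+1))! : ℝ) ≠ 0 := by positivity
  have hT0 : Real.sqrt (((k+m))! : ℝ) ≠ 0 := by positivity
  have hfact : (((k+m+1))! : ℝ) = ((k:ℝ)+(m:ℝ)+1) * (((k+m))! : ℝ) := by
    rw [show (k+m+1)! = (k+m+1) * (k+m)! from Nat.factorial_succ _]
    push_cast
    ring
  rw [show k+m+1-1 = k+m from rfl, c1, c2, c3, c4, c5, hrec]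
  rw [div_mul_div_comm, div_mul_div_comm, div_mul_div_comm, hS, hT, hfact]
  have hF0 : (((k+m))! : ℝ) ≠ 0 := by positivity
  have hkm : ((k:ℝ)+(m:ℝ)+1) ≠ 0 := by positivity
  field_simp
  ring


/-- recursive characterization of the mix terms: for `l ≥ 1` there is a
polynomial `p` with `f_{k,k+2l}(t) = (k+2) f_{k+2,k+2l}(t) − t f_{k+1,k+2l−1}(t) + p(t)`
on `[−1,1]`; and `f_{k,k+2l+1} ≡ 0`. -/
theorem mixTerm_recursion :
    (∀ k l : ℕ, 1 ≤ l → ∃ p : Polynomial ℝ, ∀ t ∈ Set.Icc (-1 : ℝ) 1,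
      mixTerm k (k + 2 * l) t
        = ((k : ℝ) + 2) * mixTerm (k + 2) (k + 2 * l) t
          - t * mixTerm (k + 1) (k + 2 * l - 1) t + p.eval t) ∧
    (∀ k l : ℕ, ∀ t ∈ Set.Icc (-1 : ℝ) 1, mixTerm k (k + 2 * l + 1) t = 0) := by
  constructor
  · intro k l hl
    set N := k + 2*l + 3 with hN
    refine ⟨∑ n ∈ Finset.range N, Polynomial.C
      (hermiteCoeff (refAct k) n * hermiteCoeff (refAct (k+2*l)) n
        - ((k:ℝ)+2) * (hermiteCoeff (refAct (k+2)) n * hermiteCoeff (refAct (k+2*l)) n)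
        + (if n = 0 then 0 else hermiteCoeff (refAct (k+1)) (n-1)
            * hermiteCoeff (refAct (k+2*l-1)) (n-1))) * Polynomial.X ^ n, ?_⟩
    intro t ht
    have ht1 : |t| ≤ 1 := abs_le.mpr ⟨ht.1, ht.2⟩
    have s1 : Summable (fun n => hermiteCoeff (refAct k) n
        * hermiteCoeff (refAct (k+2*l)) n * t^n) :=
      summable_mix (by omega) (by omega) ht1
    have s2 : Summable (fun n => hermiteCoeff (refAct (k+2)) n
        * hermiteCoeff (refAct (k+2*l)) n * t^n) :=
      summable_mix (by omega) (by omega) ht1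
    have s3 : Summable (fun n => hermiteCoeff (refAct (k+1)) n
        * hermiteCoeff (refAct (k+2*l-1)) n * t^n) :=
      summable_mix (by omega) (by omega) ht1
    set e' : ℕ → ℝ := fun n => (if n = 0 then 0 else hermiteCoeff (refAct (k+1)) (n-1)
        * hermiteCoeff (refAct (k+2*l-1)) (n-1)) * t^n with he'def
    have he'succ : (fun n => e' (n+1)) = fun n => (hermiteCoeff (refAct (k+1)) n
        * hermiteCoeff (refAct (k+2*l-1)) n * t^n) * t := by
      funext n
      simp only [he'def, Nat.succ_ne_zero, if_false, Nat.add_sub_cancel]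
      ring
    have he' : Summable e' := by
      apply (summable_nat_add_iff 1).mp
      rw [he'succ]
      exact s3.mul_right t
    have htsum : t * ∑' n, hermiteCoeff (refAct (k+1)) n
        * hermiteCoeff (refAct (k+2*l-1)) n * t^n = ∑' n, e' n := by
      rw [Summable.tsum_eq_zero_add he']
      have h0 : e' 0 = 0 := by simp [he'def]
      rw [h0, zero_add, ← tsum_mul_left]
      apply tsum_congr
      intro n
      rw [congrFun he'succ n]
      ring
    have hmain : mixTerm k (k+2*l) t - ((k:ℝ)+2) * mixTerm (k+2) (k+2*l) t + ∑' n, e' n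
        = ∑' n, (hermiteCoeff (refAct k) n * hermiteCoeff (refAct (k+2*l)) n * t^n
          - ((k:ℝ)+2) * (hermiteCoeff (refAct (k+2)) n * hermiteCoeff (refAct (k+2*l)) n * t^n)
          + e' n) := by
      rw [mixTerm, mixTerm, ← tsum_mul_left (a := ((k:ℝ)+2)),
        ← Summable.tsum_sub s1 (s2.mul_left _), ← Summable.tsum_add ((s1.sub (s2.mul_left _))) he']
    have hzero : ∀ n ∉ Finset.range N,
        (hermiteCoeff (refAct k) n * hermiteCoeff (refAct (k+2*l)) n * t^n
          - ((k:ℝ)+2) * (hermiteCoeff (refAct (k+2)) n * hermiteCoeff (refAct (k+2*l)) n * t^n)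
          + e' n) = 0 := by
      intro n hn
      rw [Finset.mem_range, not_lt] at hn
      have hne : n ≠ 0 := by omega
      have hterm := termwise k l hl (n := n) (by omega)
      have : hermiteCoeff (refAct k) n * hermiteCoeff (refAct (k+2*l)) n * t^n
          - ((k:ℝ)+2) * (hermiteCoeff (refAct (k+2)) n * hermiteCoeff (refAct (k+2*l)) n * t^n)
          + e' n
          = (hermiteCoeff (refAct k) n * hermiteCoeff (refAct (k+2*l)) n
            - ((k:ℝ)+2) * (hermiteCoeff (refAct (k+2)) n * hermiteCoeff (refAct (k+2*l)) n)
            + hermiteCoeff (refAct (k+1)) (n-1) * hermiteCoeff (refAct (k+2*l-1)) (n-1)) * t^n := by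
        simp only [he'def, if_neg hne]
        ring
      rw [this, hterm, zero_mul]
    have hsum := tsum_eq_sum (L := SummationFilter.unconditional ℕ) hzero
    have heval : Polynomial.eval t (∑ n ∈ Finset.range N, Polynomial.C
        (hermiteCoeff (refAct k) n * hermiteCoeff (refAct (k+2*l)) n
          - ((k:ℝ)+2) * (hermiteCoeff (refAct (k+2)) n * hermiteCoeff (refAct (k+2*l)) n)
          + (if n = 0 then 0 else hermiteCoeff (refAct (k+1)) (n-1)
              * hermiteCoeff (refAct (k+2*l-1)) (n-1))) * Polynomial.X ^ n)
        = ∑ n ∈ Finset.range N,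
          (hermiteCoeff (refAct k) n * hermiteCoeff (refAct (k+2*l)) n * t^n
            - ((k:ℝ)+2) * (hermiteCoeff (refAct (k+2)) n * hermiteCoeff (refAct (k+2*l)) n * t^n)
            + e' n) := by
      rw [Polynomial.eval_finset_sum]
      apply Finset.sum_congr rfl
      intro n _
      rw [Polynomial.eval_mul, Polynomial.eval_C, Polynomial.eval_pow, Polynomial.eval_X]
      simp only [he'def]
      ring
    have hmix3 : t * mixTerm (k+1) (k+2*l-1) t = ∑' n, e' n := htsum
    have key : mixTerm k (k+2*l) t - ((k:ℝ)+2) * mixTerm (k+2) (k+2*l) t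
        + t * mixTerm (k+1) (k+2*l-1) t
        = Polynomial.eval t (∑ n ∈ Finset.range N, Polynomial.C
          (hermiteCoeff (refAct k) n * hermiteCoeff (refAct (k+2*l)) n
            - ((k:ℝ)+2) * (hermiteCoeff (refAct (k+2)) n * hermiteCoeff (refAct (k+2*l)) n)
            + (if n = 0 then 0 else hermiteCoeff (refAct (k+1)) (n-1)
                * hermiteCoeff (refAct (k+2*l-1)) (n-1))) * Polynomial.X ^ n) := by
      rw [hmix3, hmain, hsum, heval]
    linarith [key]
  · intro k l t ht
    rw [mixTerm]
    convert tsum_zero with n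
    rw [mix_odd k l n, zero_mul]
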